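/- For all real y ≥ 1, the digamma function satisfies ψ(1+x+y) − ψ(1+x) ≥ y/(x+y) for every real x ≥ 0. -/

import Mathlib

open Real Set Filter

/-- The digamma function ψ(x) = Γ'(x)/Γ(x). -/
noncomputable def digamma (x : ℝ) : ℝ := deriv Real.Gamma x / Real.Gamma x

private lemma gamma_diffAt {t : ℝ} (ht : 0 < t) : DifferentiableAt ℝ Real.Gamma t := by
  refine Real.differentiableAt_Gamma (fun m => ?_)
  have : (0:ℝ) ≤ m := Nat.cast_nonneg m
  intro h; rw [h] at ht; linarith

private lemma hasDerivAt_logGamma {t : ℝ} (ht : 0 < t) :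
    HasDerivAt (fun s => Real.log (Real.Gamma s)) (digamma t) t := by
  have h1 := (gamma_diffAt ht).hasDerivAt
  have h2 := h1.log (Real.Gamma_pos_of_pos ht).ne'
  simpa [digamma] using h2

private lemma digamma_add_one {t : ℝ} (ht : 0 < t) : digamma (t + 1) = digamma t + 1 / t := by
  have hΓt := Real.Gamma_pos_of_pos ht
  have ht1 : (0:ℝ) < t + 1 := by linarith
  have hΓt1 := Real.Gamma_pos_of_pos ht1
  have hd : HasDerivAt Real.Gamma (deriv Real.Gamma (t+1)) (t+1) :=
    (gamma_diffAt ht1).hasDerivAt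
  have hcomp : HasDerivAt (fun s : ℝ => Real.Gamma (s+1)) (deriv Real.Gamma (t+1)) t := by
    have := hd.comp t ((hasDerivAt_id t).add_const 1); rw [mul_one] at this; exact this
  have hmul : HasDerivAt (fun s : ℝ => s * Real.Gamma s)
      (1 * Real.Gamma t + t * deriv Real.Gamma t) t :=
    (hasDerivAt_id t).mul (gamma_diffAt ht).hasDerivAt
  have heq : HasDerivAt (fun s : ℝ => Real.Gamma (s+1))
      (1 * Real.Gamma t + t * deriv Real.Gamma t) t := by
    apply hmul.congr_of_eventuallyEq
    filter_upwards [eventually_gt_nhds ht] with s hs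
    exact Real.Gamma_add_one hs.ne'
  have hder : deriv Real.Gamma (t+1) = Real.Gamma t + t * deriv Real.Gamma t := by
    have := hcomp.unique heq; linarith [this]
  have hΓadd : Real.Gamma (t+1) = t * Real.Gamma t := Real.Gamma_add_one ht.ne'
  rw [digamma, digamma, hder, hΓadd]
  field_simp
  ring

private lemma digamma_le_log {s : ℝ} (hs : 0 < s) : digamma s ≤ Real.log s := by
  have hconv := Real.convexOn_log_Gamma
  have h := hconv.le_slope_of_hasDerivAt (S := Ioi 0) (mem_Ioi.mpr hs)
    (mem_Ioi.mpr (by linarith : (0:ℝ) < s + 1)) (by linarith) (hasDerivAt_logGamma hs)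
  rw [slope_def_field] at h
  have hΓ := Real.Gamma_pos_of_pos hs
  have : (Real.log ∘ Real.Gamma) (s+1) - (Real.log ∘ Real.Gamma) s = Real.log s := by
    simp only [Function.comp_apply, Real.Gamma_add_one hs.ne']
    rw [Real.log_mul hs.ne' hΓ.ne']
    ring
  rw [show s + 1 - s = 1 by ring, this] at h
  simpa using h

private lemma log_le_digamma_add_one {s : ℝ} (hs : 0 < s) : Real.log s ≤ digamma (s + 1) := by
  have hconv := Real.convexOn_log_Gamma
  have h := hconv.slope_le_of_hasDerivAt (S := Ioi 0) (mem_Ioi.mpr hs)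
    (mem_Ioi.mpr (by linarith : (0:ℝ) < s + 1)) (by linarith)
    (hasDerivAt_logGamma (by linarith : (0:ℝ) < s + 1))
  rw [slope_def_field] at h
  have hΓ := Real.Gamma_pos_of_pos hs
  have : (Real.log ∘ Real.Gamma) (s+1) - (Real.log ∘ Real.Gamma) s = Real.log s := by
    simp only [Function.comp_apply, Real.Gamma_add_one hs.ne']
    rw [Real.log_mul hs.ne' hΓ.ne']
    ring
  rw [show s + 1 - s = 1 by ring, this] at h
  simpa using h

private lemma digamma_add_nat {t : ℝ} (ht : 0 < t) (n : ℕ) :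
    digamma (t + n) = digamma t + ∑ k ∈ Finset.range n, 1 / (t + k) := by
  induction n with
  | zero => simp
  | succ n ih =>
    have htn : (0:ℝ) < t + n := by positivity
    have : (t : ℝ) + (n + 1 : ℕ) = (t + n) + 1 := by push_cast; ring
    rw [this, digamma_add_one htn, ih, Finset.sum_range_succ]
    ring

private lemma g_mono {u v : ℝ} (hv : 0 < v) (hvu : v ≤ u) :
    v - Real.log (1 + v) ≤ u - Real.log (1 + u) := by
  have h1v : (0:ℝ) < 1 + v := by linarith
  have h1u : (0:ℝ) < 1 + u := by linarith
  have h1 : Real.log (1 + u) - Real.log (1 + v) = Real.log ((1 + u) / (1 + v)) := by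
    rw [Real.log_div h1u.ne' h1v.ne']
  have h2 : Real.log ((1 + u) / (1 + v)) ≤ (1 + u) / (1 + v) - 1 :=
    Real.log_le_sub_one_of_pos (by positivity)
  have h3 : (1 + u) / (1 + v) - 1 ≤ u - v := by
    rw [div_sub_one h1v.ne', div_le_iff₀ h1v]
    nlinarith
  linarith

private lemma per_term {a b : ℝ} (ha : 0 < a) (hab : a ≤ b) (k : ℕ) :
    (Real.log (a + k + 1) - Real.log (a + k)) - (Real.log (b + k + 1) - Real.log (b + k))
      ≤ 1 / (a + k) - 1 / (b + k) := by
  have hak : (0:ℝ) < a + k := by positivity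
  have hbk : (0:ℝ) < b + k := by linarith
  have hv : (0:ℝ) < 1 / (b + k) := by positivity
  have hvu : 1 / (b + k) ≤ 1 / (a + k) := by
    apply one_div_le_one_div_of_le hak (by linarith)
  have h := g_mono hv hvu
  have e1 : Real.log (1 + 1 / (a + k)) = Real.log (a + k + 1) - Real.log (a + k) := by
    rw [show (1:ℝ) + 1 / (a + k) = (a + k + 1) / (a + k) by field_simp,
      Real.log_div (by linarith) hak.ne']
  have e2 : Real.log (1 + 1 / (b + k)) = Real.log (b + k + 1) - Real.log (b + k) := by
    rw [show (1:ℝ) + 1 / (b + k) = (b + k + 1) / (b + k) by field_simp,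
      Real.log_div (by linarith) hbk.ne']
  rw [e1, e2] at h
  linarith

private lemma sum_bound {a b : ℝ} (ha : 0 < a) (hab : a ≤ b) (n : ℕ) :
    (Real.log (a + n) - Real.log a) - (Real.log (b + n) - Real.log b)
      ≤ ∑ k ∈ Finset.range n, (1 / (a + k) - 1 / (b + k)) := by
  induction n with
  | zero => simp
  | succ n ih =>
    rw [Finset.sum_range_succ]
    have h := per_term ha hab n
    have e : ((n : ℝ) + 1) = ((n + 1 : ℕ) : ℝ) := by push_cast; ring
    have : Real.log (a + (n + 1 : ℕ)) = Real.log (a + n + 1) := by push_cast; ring_nf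
    rw [this]
    have : Real.log (b + (n + 1 : ℕ)) = Real.log (b + n + 1) := by push_cast; ring_nf
    rw [this]
    linarith

private lemma digamma_sub_ge_log {a b : ℝ} (ha : 1 ≤ a) (hab : a ≤ b) :
    Real.log b - Real.log a ≤ digamma b - digamma a := by
  have ha0 : (0:ℝ) < a := by linarith
  have hb0 : (0:ℝ) < b := by linarith
  have key : ∀ n : ℕ, 1 ≤ n →
      Real.log b - Real.log a ≤ digamma b - digamma a + 1 / n := by
    intro n hn
    have hn0 : (0:ℝ) < n := by exact_mod_cast hn
    have hbn1 : (0:ℝ) < b + n - 1 := by linarith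
    -- digamma (b+n) ≥ log (b+n-1)
    have h1 : Real.log (b + n - 1) ≤ digamma (b + n) := by
      have := log_le_digamma_add_one hbn1
      rwa [show b + n - 1 + 1 = b + n by ring] at this
    -- digamma (a+n) ≤ log (a+n)
    have h2 : digamma (a + n) ≤ Real.log (a + n) := digamma_le_log (by positivity)
    -- recurrences
    have ra := digamma_add_nat ha0 n
    have rb := digamma_add_nat hb0 n
    -- sum comparison
    have hs := sum_bound ha0 hab n
    have hsum : ∑ k ∈ Finset.range n, (1 / (a + k) - 1 / (b + k))
        = (∑ k ∈ Finset.range n, 1 / (a + k)) - ∑ k ∈ Finset.range n, 1 / (b + k) :=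
      Finset.sum_sub_distrib _ _
    -- log(b+n) - log(b+n-1) ≤ 1/(b+n-1) ≤ 1/n
    have h3 : Real.log (b + n) - Real.log (b + n - 1) ≤ 1 / n := by
      have hlog : Real.log ((b + n) / (b + n - 1)) ≤ (b + n) / (b + n - 1) - 1 :=
        Real.log_le_sub_one_of_pos (by positivity)
      rw [Real.log_div (by linarith) hbn1.ne'] at hlog
      have h4 : (b + n) / (b + n - 1) - 1 = 1 / (b + n - 1) := by
        rw [div_sub_one hbn1.ne']; ring_nf
      have h5 : 1 / (b + n - 1) ≤ 1 / n := by
        apply one_div_le_one_div_of_le hn0 (by linarith)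
      linarith
    rw [hsum] at hs
    linarith
  -- conclude by letting n → ∞
  have : ∀ ε > 0, Real.log b - Real.log a ≤ digamma b - digamma a + ε := by
    intro ε hε
    obtain ⟨n, hnε⟩ := exists_nat_gt (1 / ε)
    have hn1 : 1 ≤ n := by
      by_contra h
      push_neg at h
      interval_cases n
      · simp at hnε; linarith [one_div_pos.mpr hε]
    have hn0 : (0:ℝ) < n := by exact_mod_cast hn1
    have : 1 / (n : ℝ) ≤ ε := by
      rw [div_le_iff₀ hn0]
      rw [div_lt_iff₀ hε] at hnε
      nlinarith
    linarith [key n hn1]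
  linarith [le_of_forall_pos_le_add this]

theorem digamma_diff_ge (x y : ℝ) (hx : 0 ≤ x) (hy : 1 ≤ y) :
    digamma (1 + x + y) - digamma (1 + x) ≥ y / (x + y) := by
  have hb : (0:ℝ) < x + y := by linarith
  have h1 : digamma (1 + x + y) = digamma (x + y) + 1 / (x + y) := by
    have := digamma_add_one hb
    rwa [show x + y + 1 = 1 + x + y by ring] at this
  have h2 : Real.log (x + y) - Real.log (1 + x) ≤ digamma (x + y) - digamma (1 + x) :=
    digamma_sub_ge_log (by linarith) (by linarith)
  have h3 : Real.log (1 + x) - Real.log (x + y) ≤ (1 + x) / (x + y) - 1 := by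
    have := Real.log_le_sub_one_of_pos (show (0:ℝ) < (1 + x) / (x + y) by positivity)
    rwa [Real.log_div (by linarith) hb.ne'] at this
  have h4 : (1 + x) / (x + y) - 1 = (1 - y) / (x + y) := by
    rw [div_sub_one hb.ne']; ring_nf
  have h5 : (1:ℝ) / (x + y) - (1 - y) / (x + y) = y / (x + y) := by
    rw [div_sub_div_same]; ring_nf
  rw [ge_iff_le, h1]
  linarith
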